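/- Let d be odd, and let I be a finite index type with |I| ≥ 2. Then for every d-way hypermatrix X : I^d → ℂ, the fully symmetrized hyperdeterminant vanishes: Σ_{(σ₁,…,σ_d) ∈ Perm(I)^d} sgn(σ₁)⋯sgn(σ_d) · ∏_{i∈I} X(σ₁(i),…,σ_d(i)) = 0. -/

import Mathlib

/-- For odd `d` and `|I| ≥ 2`, the fully symmetrized hyperdeterminant vanishes identically:
`Σ_{σ₁,…,σ_d} sgn(σ₁)⋯sgn(σ_d) ∏_i X(σ₁ i, …, σ_d i) = 0`. -/
theorem symmetrized_hdet_odd_vanishes (d : ℕ) (hd : Odd d)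
    (I : Type*) [Fintype I] [DecidableEq I] (hI : 2 ≤ Fintype.card I)
    (X : (Fin d → I) → ℂ) :
    ∑ σ : Fin d → Equiv.Perm I,
      ((∏ k, (Equiv.Perm.sign (σ k) : ℤ)) : ℂ) * ∏ i, X (fun k => σ k i) = 0 := by
  obtain ⟨a, b, hab⟩ := Fintype.exists_pair_of_one_lt_card hI
  set τ : Equiv.Perm I := Equiv.swap a b with hτ
  set S : ℂ := ∑ σ : Fin d → Equiv.Perm I,
      ((∏ k, (Equiv.Perm.sign (σ k) : ℤ)) : ℂ) * ∏ i, X (fun k => σ k i) with hS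
  have key : S = -S := by
    rw [hS, ← Finset.sum_neg_distrib]
    refine Fintype.sum_equiv (Equiv.piCongrRight fun _ => Equiv.mulRight τ) _ _ ?_
    intro σ
    have hsign : ∀ k : Fin d, (Equiv.Perm.sign (σ k * τ) : ℤ) = -(Equiv.Perm.sign (σ k) : ℤ) := by
      intro k
      simp [hτ, Equiv.Perm.sign_swap hab]
    have h1 : (∏ k, ((Equiv.Perm.sign (σ k * τ) : ℤ) : ℂ))
        = (-1) ^ d * ∏ k, ((Equiv.Perm.sign (σ k) : ℤ) : ℂ) := by
      have : ∀ k : Fin d, ((Equiv.Perm.sign (σ k * τ) : ℤ) : ℂ)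
          = (-1) * ((Equiv.Perm.sign (σ k) : ℤ) : ℂ) := by
        intro k; rw [hsign k]; push_cast; ring
      rw [Finset.prod_congr rfl fun k _ => this k, Finset.prod_mul_distrib,
        Finset.prod_const, Finset.card_univ, Fintype.card_fin]
    have h2 : (∏ i, X (fun k => (σ k * τ) i)) = ∏ i, X (fun k => σ k i) :=
      Equiv.prod_comp τ (fun i => X (fun k => σ k i))
    have h3 : ∀ k : Fin d,
        (Equiv.piCongrRight fun _ : Fin d => Equiv.mulRight τ) σ k = σ k * τ := fun k => rfl
    simp only [h3]
    rw [h2]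
    rw [h1, hd.neg_one_pow]
    ring
  exact self_eq_neg.mp key
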